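/- For all x, y ∈ ℝ^m and t > 0, det[N_t(y_j - x_i) - N_t(y_j + x_i)]_{i,j=1}^m = (2πt)^{-m/2} e^{-(|x|²+|y|²)/(2t)} · 2^m · det[sinh(x_i y_j / t)]_{i,j=1}^m, where N_t(v) = (2πt)^{-1/2} e^{-v²/(2t)}. -/
import Mathlib


/-- The one-dimensional heat kernel. -/
noncomputable def heatKernel (t v : ℝ) : ℝ :=
  (Real.sqrt (2 * Real.pi * t))⁻¹ * Real.exp (-v ^ 2 / (2 * t))

/-- `det [N_t (yⱼ - xᵢ) - N_t (yⱼ + xᵢ)]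
  = (2πt)^(-m/2) e^(-(|x|²+|y|²)/(2t)) * 2^m * det [sinh (xᵢ yⱼ / t)]`. -/
theorem det_heat_diff_eq_sinh (m : ℕ) (t : ℝ) (ht : 0 < t) (x y : Fin m → ℝ) :
    (Matrix.of fun i j : Fin m =>
        heatKernel t (y j - x i) - heatKernel t (y j + x i)).det
      = (2 * Real.pi * t) ^ (-(m : ℝ) / 2) *
          Real.exp (-((∑ i, x i ^ 2) + ∑ i, y i ^ 2) / (2 * t)) * 2 ^ m *
          (Matrix.of fun i j : Fin m => Real.sinh (x i * y j / t)).det := by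
  have ha : (0:ℝ) < 2 * Real.pi * t := by positivity
  set c : Fin m → ℝ := fun i => (Real.sqrt (2 * Real.pi * t))⁻¹ * Real.exp (-x i ^ 2 / (2 * t))
  set d : Fin m → ℝ := fun j => Real.exp (-y j ^ 2 / (2 * t))
  have key : ∀ i j, heatKernel t (y j - x i) - heatKernel t (y j + x i)
      = c i * ((2:ℝ) * Real.sinh (x i * y j / t)) * d j := by
    intro i j
    have h1 : -(y j - x i) ^ 2 / (2 * t) =
        (-x i ^ 2 / (2 * t)) + (x i * y j / t) + (-y j ^ 2 / (2 * t)) := by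
      field_simp; ring
    have h2 : -(y j + x i) ^ 2 / (2 * t) =
        (-x i ^ 2 / (2 * t)) + (-(x i * y j / t)) + (-y j ^ 2 / (2 * t)) := by
      field_simp; ring
    simp only [heatKernel, c, d, h1, h2, Real.exp_add, Real.sinh_eq]
    ring
  have hM : (Matrix.of fun i j : Fin m =>
        heatKernel t (y j - x i) - heatKernel t (y j + x i))
      = Matrix.diagonal c * ((2:ℝ) • Matrix.of fun i j : Fin m =>
          Real.sinh (x i * y j / t)) * Matrix.diagonal d := by
    ext i j
    simp [Matrix.mul_diagonal, Matrix.diagonal_mul, key i j, mul_comm, mul_assoc]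
  rw [hM, Matrix.det_mul, Matrix.det_mul, Matrix.det_diagonal, Matrix.det_diagonal,
    Matrix.det_smul]
  have hs : ∀ f : Fin m → ℝ, ∑ i, -f i ^ 2 / (2 * t) = -(∑ i, f i ^ 2) / (2 * t) := by
    intro f
    rw [← Finset.sum_neg_distrib, Finset.sum_div]
  have hc : ∏ i, c i = ((Real.sqrt (2 * Real.pi * t))⁻¹) ^ m *
      Real.exp (-(∑ i, x i ^ 2) / (2 * t)) := by
    rw [Finset.prod_mul_distrib, Finset.prod_const, Finset.card_univ, Fintype.card_fin,
      ← Real.exp_sum, hs]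
  have hd : ∏ j, d j = Real.exp (-(∑ i, y i ^ 2) / (2 * t)) := by
    rw [← Real.exp_sum, hs]
  have hpow : ((Real.sqrt (2 * Real.pi * t))⁻¹) ^ m = (2 * Real.pi * t) ^ (-(m : ℝ) / 2) := by
    rw [Real.sqrt_eq_rpow, ← Real.rpow_neg ha.le, ← Real.rpow_natCast _ m,
      ← Real.rpow_mul ha.le]
    congr 1
    ring
  rw [hc, hd, hpow]
  simp only [Fintype.card_fin]
  rw [show -((∑ i, x i ^ 2) + ∑ i, y i ^ 2) / (2 * t)
      = -(∑ i, x i ^ 2) / (2 * t) + -(∑ i, y i ^ 2) / (2 * t) by ring, Real.exp_add]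
  ring
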